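/- arXiv:2507.15065 — 3 statements merged into one kernel-verified Lean document; each statement's English description precedes it below -/
import Mathlib

section
/- Let H be Hermitian on ℂ^N, ψ a unit vector, E = ⟨ψ|H|ψ⟩, V = ⟨ψ|H²|ψ⟩ − E² > 0, and W = [H, |ψ⟩⟨ψ|]. Then for all real s, e^{sW}ψ = cos(s√V)·ψ + (sin(s√V)/√V)·Wψ. -/
open scoped InnerProductSpace

set_option maxHeartbeats 1000000 in
theorem exp_commutator_on_state (N : ℕ) (H : Matrix (Fin N) (Fin N) ℂ)
    (hherm : H.IsHermitian) (ψ : EuclideanSpace ℂ (Fin N)) (hψ : ‖ψ‖ = 1)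
    (E V : ℝ)
    (hE : (E : ℂ) = ⟪ψ, Matrix.toEuclideanLin H ψ⟫_ℂ)
    (hV : (V : ℂ) = ⟪ψ, Matrix.toEuclideanLin (H * H) ψ⟫_ℂ - (E : ℂ) ^ 2)
    (hVpos : 0 < V)
    (W : Matrix (Fin N) (Fin N) ℂ)
    (hW : W = H * Matrix.vecMulVec ψ (star ψ) - Matrix.vecMulVec ψ (star ψ) * H)
    (s : ℝ) :
    Matrix.toEuclideanLin (NormedSpace.exp ((s : ℂ) • W)) ψ =
      (Real.cos (s * Real.sqrt V) : ℂ) • ψ +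
        ((Real.sin (s * Real.sqrt V) / Real.sqrt V : ℝ) : ℂ) •
          Matrix.toEuclideanLin W ψ := by
  classical
  set T := Matrix.toEuclideanCLM (𝕜 := ℂ) (n := Fin N) with hT
  have hTlin : ∀ (M : Matrix (Fin N) (Fin N) ℂ) (x : EuclideanSpace ℂ (Fin N)),
      T M x = Matrix.toEuclideanLin M x := fun M x => rfl
  -- projection action
  have hP : ∀ x : EuclideanSpace ℂ (Fin N),
      T (Matrix.vecMulVec ψ (star ψ)) x = ⟪ψ, x⟫_ℂ • ψ := by
    intro x
    ext i
    have h : (T (Matrix.vecMulVec ψ (star ψ)) x) i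
        = (Matrix.vecMulVec ψ (star ψ)).mulVec x i := rfl
    rw [h]
    simp [Matrix.mulVec, Matrix.vecMulVec_apply, dotProduct, PiLp.inner_apply,
      Finset.sum_mul, Finset.mul_sum]
    rw [Finset.sum_congr rfl]
    intro j _
    ring
  set A := T W with hA
  set Hc := T H with hHc
  have hinner1 : ⟪ψ, ψ⟫_ℂ = 1 := by
    rw [inner_self_eq_norm_sq_to_K, hψ]; norm_num
  have hWact : ∀ x, A x = ⟪ψ, x⟫_ℂ • Hc ψ - ⟪ψ, Hc x⟫_ℂ • ψ := by
    intro x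
    rw [hA, hW]
    rw [map_sub, map_mul, map_mul]
    simp only [ContinuousLinearMap.sub_apply, ContinuousLinearMap.mul_apply]
    rw [hP, hP, map_smul]
  have hEψ : ⟪ψ, Hc ψ⟫_ℂ = (E : ℂ) := by rw [hHc, hTlin]; exact hE.symm
  have hAψ : A ψ = Hc ψ - (E : ℂ) • ψ := by
    rw [hWact, hinner1, one_smul, hEψ]
  have hHHψ : ⟪ψ, Hc (Hc ψ)⟫_ℂ = (V : ℂ) + (E : ℂ) ^ 2 := by
    have h2 : Hc (Hc ψ) = T (H * H) ψ := by rw [map_mul]; rfl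
    rw [h2, hTlin]
    linear_combination -hV
  have hA2ψ : A (A ψ) = (-(V : ℂ)) • ψ := by
    rw [hAψ, map_sub, map_smul, hWact (Hc ψ), hAψ, hHHψ, hEψ]
    module
  -- powers
  have hAeven : ∀ k : ℕ, (A ^ (2 * k)) ψ = ((-(V : ℂ)) ^ k) • ψ := by
    intro k
    induction k with
    | zero => simp
    | succ k ih =>
      have h2 : 2 * (k + 1) = 2 * k + 1 + 1 := by ring
      rw [h2, pow_succ, pow_succ, ContinuousLinearMap.mul_apply,
        ContinuousLinearMap.mul_apply, hA2ψ, map_smul, ih, smul_smul, ← pow_succ']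
  have hAodd : ∀ k : ℕ, (A ^ (2 * k + 1)) ψ = ((-(V : ℂ)) ^ k) • A ψ := by
    intro k
    rw [pow_succ', ContinuousLinearMap.mul_apply, hAeven, map_smul]
  -- the continuous linear equivalence underlying T
  let e : Matrix (Fin N) (Fin N) ℂ ≃L[ℂ]
      (EuclideanSpace ℂ (Fin N) →L[ℂ] EuclideanSpace ℂ (Fin N)) :=
    LinearEquiv.toContinuousLinearEquiv (AlgEquivClass.toAlgEquiv T).toLinearEquiv
  have he : ∀ M, e M = T M := fun _ => rfl
  -- transfer exp through T
  have hmap : T (NormedSpace.exp ((s : ℂ) • W)) = NormedSpace.exp ((s : ℂ) • A) := by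
    have h1 : NormedSpace.exp ((s : ℂ) • W)
        = ∑' n : ℕ, ((n.factorial : ℂ))⁻¹ • ((s : ℂ) • W) ^ n :=
      by rw [NormedSpace.exp_eq_tsum ℂ]
    have h2 : NormedSpace.exp ((s : ℂ) • A)
        = ∑' n : ℕ, ((n.factorial : ℂ))⁻¹ • ((s : ℂ) • A) ^ n := by
      rw [NormedSpace.exp_eq_tsum ℂ]
    rw [h1, h2, ← he, e.map_tsum]
    congr 1
    funext n
    rw [map_smul, he, map_pow, map_smul, hA]
  -- series for exp applied to ψ
  have hsum := (ContinuousLinearMap.apply ℂ (EuclideanSpace ℂ (Fin N)) ψ).hasSum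
    (NormedSpace.exp_series_hasSum_exp' (𝕂 := ℂ) ((s : ℂ) • A))
  simp only [ContinuousLinearMap.apply_apply] at hsum
  set z : ℂ := ((s * Real.sqrt V : ℝ) : ℂ) with hz
  have hzz : z = (s : ℂ) * (Real.sqrt V : ℂ) := by rw [hz]; push_cast; ring
  have hVc : ((Real.sqrt V : ℝ) : ℂ) ^ 2 = (V : ℂ) := by
    norm_cast
    rw [Real.sq_sqrt hVpos.le]
  have hz2k : ∀ k : ℕ, z ^ (2 * k) = (s : ℂ) ^ (2 * k) * (V : ℂ) ^ k := by
    intro k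
    rw [hzz, mul_pow, pow_mul ((Real.sqrt V : ℝ) : ℂ), hVc]
  have hz2k1 : ∀ k : ℕ, z ^ (2 * k + 1)
      = (s : ℂ) ^ (2 * k + 1) * (V : ℂ) ^ k * ((Real.sqrt V : ℝ) : ℂ) := by
    intro k
    rw [pow_succ, hz2k, hzz]
    ring
  have hsV : (Real.sqrt V : ℂ) ≠ 0 := by
    simpa using (Real.sqrt_ne_zero'.2 hVpos)
  have hcos : HasSum (fun k : ℕ => ((-1 : ℂ) ^ k * z ^ (2 * k) / ((2 * k).factorial : ℂ)) • ψ)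
      ((Complex.cos z) • ψ) := (Complex.hasSum_cos z).smul_const ψ
  have hsin : HasSum
      (fun k : ℕ => ((-1 : ℂ) ^ k * z ^ (2 * k + 1) / ((2 * k + 1).factorial : ℂ)
        / (Real.sqrt V : ℂ)) • A ψ)
      ((Complex.sin z / (Real.sqrt V : ℂ)) • A ψ) :=
    ((Complex.hasSum_sin z).div_const _).smul_const (A ψ)
  have heq_even : ∀ k : ℕ,
      ((((2 * k).factorial : ℕ) : ℂ)⁻¹ • ((s : ℂ) • A) ^ (2 * k)) ψ
        = ((-1 : ℂ) ^ k * z ^ (2 * k) / (((2 * k).factorial : ℕ) : ℂ)) • ψ := by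
    intro k
    rw [smul_pow, ContinuousLinearMap.smul_apply, ContinuousLinearMap.smul_apply, hAeven,
      smul_smul, smul_smul]
    congr 1
    rw [hz2k, neg_pow]
    field_simp
  have heq_odd : ∀ k : ℕ,
      ((((2 * k + 1).factorial : ℕ) : ℂ)⁻¹ • ((s : ℂ) • A) ^ (2 * k + 1)) ψ
        = ((-1 : ℂ) ^ k * z ^ (2 * k + 1) / (((2 * k + 1).factorial : ℕ) : ℂ)
            / (Real.sqrt V : ℂ)) • A ψ := by
    intro k
    rw [smul_pow, ContinuousLinearMap.smul_apply, ContinuousLinearMap.smul_apply, hAodd,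
      smul_smul, smul_smul]
    congr 1
    rw [hz2k1, neg_pow]
    have hc := mul_inv_cancel₀ hsV
    linear_combination (-((((2 * k + 1).factorial : ℂ))⁻¹ * (s:ℂ) ^ (2 * k + 1) *
      (V:ℂ) ^ k * (-1 : ℂ) ^ k)) * hc
  have htarget : HasSum (fun n : ℕ => (((n.factorial : ℕ) : ℂ)⁻¹ • ((s : ℂ) • A) ^ n) ψ)
      ((Complex.cos z) • ψ + (Complex.sin z / (Real.sqrt V : ℂ)) • A ψ) := by
    refine HasSum.even_add_odd ?_ ?_
    · simpa only [heq_even] using hcos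
    · simpa only [heq_odd] using hsin
  have hexpψ : NormedSpace.exp ((s : ℂ) • A) ψ
      = (Complex.cos z) • ψ + (Complex.sin z / (Real.sqrt V : ℂ)) • A ψ :=
    hsum.unique htarget
  calc Matrix.toEuclideanLin (NormedSpace.exp ((s : ℂ) • W)) ψ
      = T (NormedSpace.exp ((s : ℂ) • W)) ψ := (hTlin _ _).symm
    _ = NormedSpace.exp ((s : ℂ) • A) ψ := by rw [hmap]
    _ = (Complex.cos z) • ψ + (Complex.sin z / (Real.sqrt V : ℂ)) • A ψ := hexpψ
    _ = (Real.cos (s * Real.sqrt V) : ℂ) • ψ +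
        ((Real.sin (s * Real.sqrt V) / Real.sqrt V : ℝ) : ℂ) •
          Matrix.toEuclideanLin W ψ := by
        rw [← hTlin, ← hA]
        congr 1
        · rw [hz, Complex.ofReal_cos]
        · congr 1
          rw [hz]
          push_cast [Complex.ofReal_sin]
          ring
end

section
/- Let H_f be a projector on ℂ^N and ψ₀ a unit vector. Then the operator norm of the nested commutator [|ψ₀⟩⟨ψ₀|, [|ψ₀⟩⟨ψ₀|, H_f]] is at most √(2V₀), where V₀ = ⟨ψ₀|H_f²|ψ₀⟩ − ⟨ψ₀|H_f|ψ₀⟩². -/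
open scoped InnerProductSpace
open ContinuousLinearMap

lemma aux_rank2_bound {E : Type*} [NormedAddCommGroup E] [InnerProductSpace ℂ E]
    [CompleteSpace E] (ψ w : E) (hψ : ‖ψ‖ = 1) (horth : ⟪ψ, w⟫_ℂ = 0) :
    ‖(innerSL ℂ ψ).smulRight w + (innerSL ℂ w).smulRight ψ‖ ≤ Real.sqrt (2 * ‖w‖ ^ 2) := by
  set T := (innerSL ℂ ψ).smulRight w + (innerSL ℂ w).smulRight ψ with hT
  have horth' : ⟪w, ψ⟫_ℂ = 0 := by rw [← inner_conj_symm, horth, map_zero]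
  have hψ2 : ⟪ψ, ψ⟫_ℂ = 1 := by
    rw [inner_self_eq_norm_sq_to_K, hψ]; norm_num
  have hw2 : ⟪w, w⟫_ℂ = ((‖w‖ ^ 2 : ℝ) : ℂ) := by
    rw [inner_self_eq_norm_sq_to_K]; norm_num
  have hsa : star T = T := by
    rw [ContinuousLinearMap.star_eq_adjoint]
    symm
    rw [ContinuousLinearMap.eq_adjoint_iff]
    intro x y
    simp only [hT, add_apply, smulRight_apply, innerSL_apply_apply, inner_add_left,
      inner_add_right, inner_smul_left, inner_smul_right, ← inner_conj_symm x w,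
      ← inner_conj_symm x ψ]
    ring
  have hT2 : T * T = (innerSL ℂ w).smulRight w
      + ((‖w‖ ^ 2 : ℝ) : ℂ) • (innerSL ℂ ψ).smulRight ψ := by
    ext x
    simp only [hT, ContinuousLinearMap.mul_apply, add_apply, smulRight_apply,
      innerSL_apply_apply, coe_smul', Pi.smul_apply, inner_add_right, inner_smul_right,
      horth, horth', hψ2, hw2, mul_zero, mul_one, zero_add, add_zero, smul_add,
      smul_smul, zero_mul]
    module
  have hnorm2 : ‖T‖ ^ 2 ≤ 2 * ‖w‖ ^ 2 := by
    have h1 : ‖T‖ * ‖T‖ = ‖T * T‖ := by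
      conv_lhs => rw [← CStarRing.norm_star_mul_self (x := T), hsa]
    have h2 : ‖T * T‖ ≤ ‖w‖ ^ 2 + ‖w‖ ^ 2 := by
      rw [hT2]
      refine (norm_add_le _ _).trans ?_
      gcongr
      · rw [norm_smulRight_apply, innerSL_apply_norm]; nlinarith [norm_nonneg w]
      · rw [norm_smul, norm_smulRight_apply, innerSL_apply_norm, hψ]
        simp [Complex.norm_real]
    nlinarith
  have := Real.sqrt_le_sqrt hnorm2
  rwa [Real.sqrt_sq (norm_nonneg T)] at this

theorem nested_commutator_norm_bound (N : ℕ) (Hf : Matrix (Fin N) (Fin N) ℂ)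
    (hherm : Hf.IsHermitian) (hproj : Hf * Hf = Hf)
    (ψ0 : EuclideanSpace ℂ (Fin N)) (hψ0 : ‖ψ0‖ = 1)
    (V0 : ℝ)
    (hV0 : (V0 : ℂ) = ⟪ψ0, Matrix.toEuclideanLin (Hf * Hf) ψ0⟫_ℂ -
      ⟪ψ0, Matrix.toEuclideanLin Hf ψ0⟫_ℂ ^ 2)
    (P : Matrix (Fin N) (Fin N) ℂ) (hP : P = Matrix.vecMulVec ψ0 (star ψ0)) :
    ‖Matrix.toEuclideanCLM (𝕜 := ℂ) (P * (P * Hf - Hf * P) - (P * Hf - Hf * P) * P)‖ ≤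
      Real.sqrt (2 * V0) := by
  set h := Matrix.toEuclideanCLM (𝕜 := ℂ) Hf with hh
  have happ : ∀ x : EuclideanSpace ℂ (Fin N), Matrix.toEuclideanLin Hf x = h x := fun _ => rfl
  have hsym : ∀ x y : EuclideanSpace ℂ (Fin N), ⟪h x, y⟫_ℂ = ⟪x, h y⟫_ℂ := by
    intro x y
    exact (Matrix.isHermitian_iff_isSymmetric.mp hherm) x y
  set a : ℂ := ⟪ψ0, h ψ0⟫_ℂ with ha_def
  have ha : (starRingEnd ℂ) a = a := by
    rw [ha_def, inner_conj_symm, hsym]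
  have hψ2 : ⟪ψ0, ψ0⟫_ℂ = 1 := by
    rw [inner_self_eq_norm_sq_to_K, hψ0]; norm_num
  set w : EuclideanSpace ℂ (Fin N) := h ψ0 - a • ψ0 with hw
  have horth : ⟪ψ0, w⟫_ℂ = 0 := by
    rw [hw, inner_sub_right, inner_smul_right, hψ2, ← ha_def]; ring
  have hV0w : V0 = ‖w‖ ^ 2 := by
    have h1 : ⟪w, w⟫_ℂ = ((‖w‖ ^ 2 : ℝ) : ℂ) := by
      rw [inner_self_eq_norm_sq_to_K]; norm_num
    have h2 : ⟪w, w⟫_ℂ = ⟪ψ0, Matrix.toEuclideanLin (Hf * Hf) ψ0⟫_ℂ - a ^ 2 := by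
      have hhh : Matrix.toEuclideanLin (Hf * Hf) ψ0 = h (h ψ0) := by
        have : Matrix.toEuclideanCLM (𝕜 := ℂ) (Hf * Hf) = h * h := by rw [map_mul]
        calc Matrix.toEuclideanLin (Hf * Hf) ψ0
            = Matrix.toEuclideanCLM (𝕜 := ℂ) (Hf * Hf) ψ0 := rfl
          _ = h (h ψ0) := by rw [this]; rfl
      rw [hw]
      simp only [inner_sub_left, inner_sub_right, inner_smul_left, inner_smul_right,
        hψ2, ha, hhh]
      have h3 : ⟪h ψ0, h ψ0⟫_ℂ = ⟪ψ0, h (h ψ0)⟫_ℂ := hsym _ _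
      have h4 : ⟪h ψ0, ψ0⟫_ℂ = a := by rw [hsym]
      rw [h3, h4, ← ha_def]
      ring
    have : (V0 : ℂ) = ((‖w‖ ^ 2 : ℝ) : ℂ) := by
      rw [hV0, happ, ← ha_def, ← h2, h1]
    exact_mod_cast this
  have hp : Matrix.toEuclideanCLM (𝕜 := ℂ) P = (innerSL ℂ ψ0).smulRight ψ0 := by
    ext x i
    simp only [hP, smulRight_apply, innerSL_apply_apply, PiLp.inner_apply, RCLike.inner_apply,
      PiLp.smul_apply, smul_eq_mul]
    show (Matrix.mulVec (Matrix.vecMulVec ψ0 (star ψ0)) (WithLp.equiv 2 _ x)) i = _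
    simp only [Matrix.mulVec, Matrix.vecMulVec_apply, dotProduct, Pi.star_apply,
      Finset.sum_mul, Finset.mul_sum]
    refine Finset.sum_congr rfl fun j _ => ?_
    show ψ0 i * (starRingEnd ℂ) (ψ0 j) * x j = x j * (starRingEnd ℂ) (ψ0 j) * ψ0 i
    ring
  have heq : Matrix.toEuclideanCLM (𝕜 := ℂ) (P * (P * Hf - Hf * P) - (P * Hf - Hf * P) * P)
      = (innerSL ℂ ψ0).smulRight w + (innerSL ℂ w).smulRight ψ0 := by
    rw [map_sub, map_mul, map_mul, map_sub, map_sub, map_mul, map_mul, hp, ← hh]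
    refine ContinuousLinearMap.ext fun x => ?_
    have hwx : ⟪w, x⟫_ℂ = ⟪ψ0, h x⟫_ℂ - a * ⟪ψ0, x⟫_ℂ := by
      rw [hw, inner_sub_left, inner_smul_left, ha, hsym]
    simp only [ContinuousLinearMap.sub_apply, ContinuousLinearMap.mul_apply,
      add_apply, smulRight_apply, innerSL_apply_apply, map_smul, inner_smul_right,
      inner_sub_right, hψ2, mul_one, hwx, hw, ← ha_def, smul_sub, smul_smul,
      inner_smul_left, ha, hsym ψ0 x]
    module
  rw [heq, hV0w]
  exact aux_rank2_bound ψ0 w hψ0 horth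
end

section
/- For all x ∈ [0, π/2), sin(2x)/(2x) ≥ |π/2 − x|/2, equivalently 1/sinc(2x) ≤ 2/|π/2 − x| where sinc(t) = sin(t)/t. -/
noncomputable def sinc (t : ℝ) : ℝ := if t = 0 then 1 else Real.sin t / t

lemma key1 (t : ℝ) (h0 : 0 ≤ t) (h1 : t ≤ 1) : t * (Real.pi - t) ≤ 4 * Real.sin t := by
  rcases eq_or_lt_of_le h0 with h | h
  · simp [← h]
  · have hs := Real.sin_gt_sub_cube h
    have hpi := Real.pi_lt_d2
    nlinarith [sq_nonneg t, mul_pos h h]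

lemma key2 (t : ℝ) (h0 : 1 ≤ t) (h1 : t ≤ Real.pi / 2) : t * (Real.pi - t) ≤ 4 * Real.sin t := by
  have hpi := Real.pi_lt_d2
  have hsin1 : (3:ℝ)/4 < Real.sin 1 := by
    have := Real.sin_gt_sub_cube (by norm_num : (0:ℝ) < 1)
    nlinarith
  have hmono : Real.sin 1 ≤ Real.sin t := by
    apply Real.strictMonoOn_sin.monotoneOn ⟨by nlinarith, by nlinarith⟩ ⟨by nlinarith, h1⟩ h0
  nlinarith [sq_nonneg (2*t - Real.pi)]

lemma key (t : ℝ) (h0 : 0 ≤ t) (h1 : t ≤ Real.pi) : t * (Real.pi - t) ≤ 4 * Real.sin t := by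
  have hpi := Real.pi_gt_three
  rcases le_or_gt t (Real.pi / 2) with hle | hgt
  · rcases le_or_gt t 1 with h | h
    · exact key1 t h0 h
    · exact key2 t h.le hle
  · rcases le_or_gt (Real.pi - t) 1 with h | h
    · have := key1 (Real.pi - t) (by linarith) h
      rw [Real.sin_pi_sub] at this
      nlinarith
    · have := key2 (Real.pi - t) h.le (by linarith)
      rw [Real.sin_pi_sub] at this
      nlinarith

theorem sinc_lower_bound :
    ∀ x ∈ Set.Ico (0 : ℝ) (Real.pi / 2),
      sinc (2 * x) ≥ |Real.pi / 2 - x| / 2 := by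
  rintro x ⟨hx0, hx1⟩
  have hpi := Real.pi_gt_three
  have hpi2 := Real.pi_lt_d2
  have habs : |Real.pi / 2 - x| = Real.pi / 2 - x := abs_of_pos (by linarith)
  rcases eq_or_lt_of_le hx0 with h | h
  · rw [← h]
    simp only [mul_zero, sinc, if_pos rfl, sub_zero, ge_iff_le, if_true]
    norm_num
    rw [abs_of_pos (by positivity)]
    linarith
  · have h2x : (0:ℝ) < 2 * x := by linarith
    rw [ge_iff_le, habs, sinc, if_neg (ne_of_gt h2x), le_div_iff₀ h2x]
    have := key (2 * x) (by linarith) (by linarith)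
    nlinarith
end
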